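/- Let ‖·‖ be a subadditive homogeneous norm on T̃⁽ᵐ⁾(V) and d(g,h) = ‖g⁻¹ ⊗ h‖. There is a constant C_m > 0 such that for all g, h ∈ T̃⁽ᵐ⁾(V): if max_{i=1..m} |hⁱ − gⁱ| ≤ 1 then d(g,h) ≤ C_m max{1, ‖g‖} (max_{i=1..m} |hⁱ − gⁱ|)^{1/m}. -/

import Mathlib

open scoped BigOperators NNReal

/-- The `i`-th graded component of `x`, in the ambient algebra `A` which models the
truncated tensor algebra `T⁽ᵐ⁾(V)`. -/
noncomputable def gcomp {A : Type*} [NormedRing A] [NormedAlgebra ℝ A]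
    (𝒜 : ℕ → Submodule ℝ A) [GradedAlgebra 𝒜] (x : A) (i : ℕ) : A :=
  (DirectSum.decompose 𝒜 x i : A)

/-- The homogeneous norm `‖x‖ = max_{i=1..m} (i!|xⁱ|)^{1/i}`. -/
noncomputable def hnorm {A : Type*} [NormedRing A] [NormedAlgebra ℝ A]
    (𝒜 : ℕ → Submodule ℝ A) [GradedAlgebra 𝒜] (m : ℕ) (x : A) : ℝ :=
  (((Finset.Icc 1 m).sup fun i =>
    ((i.factorial : ℝ≥0) * ‖gcomp 𝒜 x i‖₊) ^ ((i : ℝ)⁻¹) : ℝ≥0) : ℝ)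

/-- `max_{i=1..m} |hⁱ − gⁱ|`. -/
noncomputable def maxDiff {A : Type*} [NormedRing A] [NormedAlgebra ℝ A]
    (𝒜 : ℕ → Submodule ℝ A) [GradedAlgebra 𝒜] (m : ℕ) (g h : A) : ℝ :=
  (((Finset.Icc 1 m).sup fun i => ‖gcomp 𝒜 h i - gcomp 𝒜 g i‖₊ : ℝ≥0) : ℝ)

section aux
variable {A : Type*} [NormedRing A] [NormedAlgebra ℝ A]
    (𝒜 : ℕ → Submodule ℝ A) [GradedAlgebra 𝒜]

lemma gcomp_mem (x : A) (i : ℕ) : gcomp 𝒜 x i ∈ 𝒜 i := SetLike.coe_mem _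

lemma gcomp_add (x y : A) (i : ℕ) : gcomp 𝒜 (x + y) i = gcomp 𝒜 x i + gcomp 𝒜 y i := by
  simp [gcomp, DirectSum.decompose_add]

lemma gcomp_zero (i : ℕ) : gcomp 𝒜 (0 : A) i = 0 := by simp [gcomp]

noncomputable def gcompHom (i : ℕ) : A →+ A where
  toFun x := gcomp 𝒜 x i
  map_zero' := gcomp_zero 𝒜 i
  map_add' x y := gcomp_add 𝒜 x y i

lemma gcomp_sub (x y : A) (i : ℕ) : gcomp 𝒜 (x - y) i = gcomp 𝒜 x i - gcomp 𝒜 y i :=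
  map_sub (gcompHom 𝒜 i) x y

lemma gcomp_neg (x : A) (i : ℕ) : gcomp 𝒜 (-x) i = - gcomp 𝒜 x i :=
  map_neg (gcompHom 𝒜 i) x

lemma gcomp_sum {ι : Type*} (s : Finset ι) (f : ι → A) (i : ℕ) :
    gcomp 𝒜 (∑ j ∈ s, f j) i = ∑ j ∈ s, gcomp 𝒜 (f j) i :=
  map_sum (gcompHom 𝒜 i) f s

lemma gcomp_one (i : ℕ) : gcomp 𝒜 (1 : A) i = if i = 0 then 1 else 0 := by
  rcases eq_or_ne i 0 with rfl | hi
  · rw [if_pos rfl]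
    exact DirectSum.decompose_of_mem_same 𝒜 (SetLike.one_mem_graded 𝒜)
  · rw [if_neg hi]
    exact DirectSum.decompose_of_mem_ne 𝒜 (SetLike.one_mem_graded 𝒜) (Ne.symm hi)

variable {m : ℕ}

lemma gcomp_eq_zero_of_gt (htrunc : ∀ i, m < i → 𝒜 i = ⊥) (x : A) {i : ℕ} (hi : m < i) :
    gcomp 𝒜 x i = 0 := by
  exact (Submodule.eq_bot_iff _).mp (htrunc i hi) _ (DirectSum.decompose 𝒜 x i).2

lemma sum_gcomp (htrunc : ∀ i, m < i → 𝒜 i = ⊥) (x : A) {N : ℕ} (hN : m ≤ N) :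
    ∑ i ∈ Finset.range (N + 1), gcomp 𝒜 x i = x := by
  classical
  have hsub : (DFinsupp.support (DirectSum.decompose 𝒜 x)) ⊆ Finset.range (N + 1) := by
    intro i hi
    rw [DFinsupp.mem_support_iff] at hi
    rw [Finset.mem_range]
    by_contra hc
    push_neg at hc
    have : m < i := by omega
    exact hi (Subtype.ext (gcomp_eq_zero_of_gt 𝒜 htrunc x this))
  have hzero : ∀ i ∈ Finset.range (N + 1),
      i ∉ DFinsupp.support (DirectSum.decompose 𝒜 x) → gcomp 𝒜 x i = 0 := by
    intro i _ hi
    rw [DFinsupp.mem_support_iff, not_not] at hi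
    rw [gcomp, hi]; rfl
  calc ∑ i ∈ Finset.range (N + 1), gcomp 𝒜 x i
      = ∑ i ∈ DFinsupp.support (DirectSum.decompose 𝒜 x), gcomp 𝒜 x i :=
        (Finset.sum_subset hsub hzero).symm
    _ = x := DirectSum.sum_support_decompose 𝒜 x

lemma gcomp_mul (htrunc : ∀ i, m < i → 𝒜 i = ⊥) (x y : A) (n : ℕ) :
    gcomp 𝒜 (x * y) n = ∑ p ∈ Finset.HasAntidiagonal.antidiagonal n, gcomp 𝒜 x p.1 * gcomp 𝒜 y p.2 := by
  classical
  set N := m + n with hNdef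
  have hx := sum_gcomp 𝒜 htrunc x (Nat.le_add_right m n)
  have hy := sum_gcomp 𝒜 htrunc y (Nat.le_add_right m n)
  have key : ∀ j k : ℕ, gcomp 𝒜 (gcomp 𝒜 x j * gcomp 𝒜 y k) n =
      if j + k = n then gcomp 𝒜 x j * gcomp 𝒜 y k else 0 := by
    intro j k
    have hmem : gcomp 𝒜 x j * gcomp 𝒜 y k ∈ 𝒜 (j + k) :=
      SetLike.mul_mem_graded (gcomp_mem 𝒜 x j) (gcomp_mem 𝒜 y k)
    rcases eq_or_ne (j + k) n with hjk | hjk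
    · rw [if_pos hjk, gcomp, ← hjk, DirectSum.decompose_of_mem_same 𝒜 hmem]
    · rw [if_neg hjk, gcomp, DirectSum.decompose_of_mem_ne 𝒜 hmem hjk]
  conv_lhs => rw [← hx, ← hy]
  rw [Finset.sum_mul_sum, gcomp_sum]
  simp_rw [gcomp_sum, key]
  rw [← Finset.sum_product']
  rw [Finset.sum_ite, Finset.sum_const_zero, add_zero]
  apply Finset.sum_nbij' (fun p => p) (fun p => p) <;> intro p hp <;>
    simp only [Finset.mem_filter, Finset.mem_product, Finset.mem_range,
      Finset.HasAntidiagonal.mem_antidiagonal] at * <;> omega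

lemma gcomp_pow_eq_zero (htrunc : ∀ i, m < i → 𝒜 i = ⊥) (w : A)
    (hw0 : gcomp 𝒜 w 0 = 0) : ∀ k n, n < k → gcomp 𝒜 (w ^ k) n = 0 := by
  intro k
  induction k with
  | zero => intro n hn; omega
  | succ k ih =>
    intro n hn
    rw [pow_succ, gcomp_mul 𝒜 htrunc]
    apply Finset.sum_eq_zero
    intro p hp
    rw [Finset.HasAntidiagonal.mem_antidiagonal] at hp
    rcases lt_or_ge p.1 k with hlt | hge
    · rw [ih p.1 hlt, zero_mul]
    · have hp2 : p.2 = 0 := by omega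
      rw [hp2, hw0, mul_zero]

lemma pow_succ_top_eq_zero (htrunc : ∀ i, m < i → 𝒜 i = ⊥) (w : A)
    (hw0 : gcomp 𝒜 w 0 = 0) : w ^ (m + 1) = 0 := by
  rw [← sum_gcomp 𝒜 htrunc (w ^ (m + 1)) (le_refl m)]
  apply Finset.sum_eq_zero
  intro n hn
  rw [Finset.mem_range] at hn
  exact gcomp_pow_eq_zero 𝒜 htrunc w hw0 (m + 1) n (by omega)

lemma gcomp_pow_nnnorm_le (htrunc : ∀ i, m < i → 𝒜 i = ⊥) (w : A) {M c : ℝ≥0}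
    (hM : 1 ≤ M) (hc : ‖(1 : A)‖₊ ≤ c)
    (hw : ∀ i, ‖gcomp 𝒜 w i‖₊ ≤ M ^ i) :
    ∀ k, ∀ i, i ≤ m → ‖gcomp 𝒜 (w ^ k) i‖₊ ≤ c * ((m : ℝ≥0) + 1) ^ k * M ^ i := by
  intro k
  induction k with
  | zero =>
    intro i him
    rw [pow_zero, gcomp_one]
    rcases eq_or_ne i 0 with rfl | hi
    · rw [if_pos rfl]
      have hMi : (1 : ℝ≥0) ≤ M ^ (0:ℕ) := by rw [pow_zero]
      calc ‖(1 : A)‖₊ ≤ c := hc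
        _ ≤ c * ((m : ℝ≥0) + 1) ^ (0:ℕ) * M ^ (0:ℕ) := by
            rw [pow_zero, pow_zero, mul_one, mul_one]
    · rw [if_neg hi, nnnorm_zero]
      exact zero_le
  | succ k ih =>
    intro i him
    have hterm : ∀ p ∈ Finset.HasAntidiagonal.antidiagonal i,
        ‖gcomp 𝒜 (w ^ k) p.1 * gcomp 𝒜 w p.2‖₊ ≤ c * ((m : ℝ≥0) + 1) ^ k * M ^ i := by
      intro p hp
      rw [Finset.HasAntidiagonal.mem_antidiagonal] at hp
      calc ‖gcomp 𝒜 (w ^ k) p.1 * gcomp 𝒜 w p.2‖₊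
          ≤ ‖gcomp 𝒜 (w ^ k) p.1‖₊ * ‖gcomp 𝒜 w p.2‖₊ := nnnorm_mul_le _ _
        _ ≤ (c * ((m : ℝ≥0) + 1) ^ k * M ^ p.1) * M ^ p.2 :=
            mul_le_mul' (ih p.1 (by omega)) (hw p.2)
        _ = c * ((m : ℝ≥0) + 1) ^ k * M ^ i := by rw [mul_assoc, ← pow_add, hp]
    calc ‖gcomp 𝒜 (w ^ (k + 1)) i‖₊
        = ‖∑ p ∈ Finset.HasAntidiagonal.antidiagonal i, gcomp 𝒜 (w ^ k) p.1 * gcomp 𝒜 w p.2‖₊ := by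
          rw [pow_succ, gcomp_mul 𝒜 htrunc]
      _ ≤ ∑ p ∈ Finset.HasAntidiagonal.antidiagonal i, ‖gcomp 𝒜 (w ^ k) p.1 * gcomp 𝒜 w p.2‖₊ :=
          nnnorm_sum_le _ _
      _ ≤ (Finset.HasAntidiagonal.antidiagonal i).card • (c * ((m : ℝ≥0) + 1) ^ k * M ^ i) :=
          Finset.sum_le_card_nsmul _ _ _ hterm
      _ = ((i : ℝ≥0) + 1) * (c * ((m : ℝ≥0) + 1) ^ k * M ^ i) := by
          rw [Finset.Nat.card_antidiagonal, nsmul_eq_mul]; push_cast; ring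
      _ ≤ ((m : ℝ≥0) + 1) * (c * ((m : ℝ≥0) + 1) ^ k * M ^ i) := by
          apply mul_le_mul' _ le_rfl
          have : (i : ℝ≥0) ≤ (m : ℝ≥0) := by exact_mod_cast him
          exact add_le_add_left this 1
      _ = c * ((m : ℝ≥0) + 1) ^ (k + 1) * M ^ i := by ring

lemma rpow_nat_inv_pow_nat' (x : ℝ≥0) {i : ℕ} (hi : i ≠ 0) :
    (x ^ ((i : ℝ)⁻¹)) ^ i = x := by
  rw [← NNReal.rpow_natCast (x ^ ((i : ℝ)⁻¹)) i, ← NNReal.rpow_mul,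
    inv_mul_cancel₀ (Nat.cast_ne_zero.mpr hi), NNReal.rpow_one]

lemma pow_rpow_nat_inv' (x : ℝ≥0) {i : ℕ} (hi : i ≠ 0) :
    (x ^ i) ^ ((i : ℝ)⁻¹) = x := by
  rw [← NNReal.rpow_natCast x i, ← NNReal.rpow_mul,
    mul_inv_cancel₀ (Nat.cast_ne_zero.mpr hi), NNReal.rpow_one]

end aux

/-- There is `C_m > 0` such that for all `g, h ∈ T̃⁽ᵐ⁾(V)`, if
`max_{i=1..m} |hⁱ − gⁱ| ≤ 1` then
`d(g,h) = ‖g⁻¹ ⊗ h‖ ≤ C_m max{1, ‖g‖} (max_{i=1..m} |hⁱ − gⁱ|)^{1/m}`. -/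
theorem dist_le_of_maxDiff_le {A : Type*} [NormedRing A] [NormedAlgebra ℝ A]
    (𝒜 : ℕ → Submodule ℝ A) [GradedAlgebra 𝒜] (m : ℕ) (hm : 1 ≤ m)
    (htrunc : ∀ i, m < i → 𝒜 i = ⊥) :
    ∃ C : ℝ, 0 < C ∧ ∀ g h : A, gcomp 𝒜 g 0 = 1 → gcomp 𝒜 h 0 = 1 →
      maxDiff 𝒜 m g h ≤ 1 →
      hnorm 𝒜 m (Ring.inverse g * h) ≤
        C * max 1 (hnorm 𝒜 m g) * maxDiff 𝒜 m g h ^ ((m : ℝ)⁻¹) := by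
  classical
  set c : ℝ≥0 := max 1 ‖(1 : A)‖₊ with hcdef
  set c₁ : ℝ≥0 := ((m : ℝ≥0) + 1) * (c * ((m : ℝ≥0) + 1) ^ m) with hc1def
  set c₂ : ℝ≥0 := max 1 ((m.factorial : ℝ≥0) * (((m : ℝ≥0) + 1) * c₁)) with hc2def
  have hc2one : (1 : ℝ≥0) ≤ c₂ := le_max_left _ _
  refine ⟨(c₂ : ℝ), by exact_mod_cast lt_of_lt_of_le one_pos hc2one, ?_⟩
  intro g h hg0 hh0 hmd
  set Sg : ℝ≥0 := (Finset.Icc 1 m).sup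
    (fun i => ((i.factorial : ℝ≥0) * ‖gcomp 𝒜 g i‖₊) ^ ((i : ℝ)⁻¹)) with hSgdef
  set ε : ℝ≥0 := (Finset.Icc 1 m).sup
    (fun i => ‖gcomp 𝒜 h i - gcomp 𝒜 g i‖₊) with hεdef
  set M : ℝ≥0 := max 1 Sg with hMdef
  have hM1 : (1 : ℝ≥0) ≤ M := le_max_left _ _
  have hε1 : ε ≤ 1 := by
    have : maxDiff 𝒜 m g h = (ε : ℝ) := rfl
    rw [this] at hmd; exact_mod_cast hmd
  -- bound on components of g
  have hgc : ∀ i, 1 ≤ i → i ≤ m → ‖gcomp 𝒜 g i‖₊ ≤ M ^ i := by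
    intro i h1 h2
    have hle : ((i.factorial : ℝ≥0) * ‖gcomp 𝒜 g i‖₊) ^ ((i : ℝ)⁻¹) ≤ Sg :=
      Finset.le_sup (f := fun i => ((i.factorial : ℝ≥0) * ‖gcomp 𝒜 g i‖₊) ^ ((i : ℝ)⁻¹))
        (Finset.mem_Icc.mpr ⟨h1, h2⟩)
    have hpow : (i.factorial : ℝ≥0) * ‖gcomp 𝒜 g i‖₊ ≤ Sg ^ i := by
      calc (i.factorial : ℝ≥0) * ‖gcomp 𝒜 g i‖₊
          = (((i.factorial : ℝ≥0) * ‖gcomp 𝒜 g i‖₊) ^ ((i : ℝ)⁻¹)) ^ i :=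
            (rpow_nat_inv_pow_nat' _ (by omega)).symm
        _ ≤ Sg ^ i := pow_le_pow_left₀ (zero_le) hle i
    have hfac : (1 : ℝ≥0) ≤ (i.factorial : ℝ≥0) := by
      exact_mod_cast Nat.one_le_iff_ne_zero.mpr i.factorial_ne_zero
    calc ‖gcomp 𝒜 g i‖₊ ≤ (i.factorial : ℝ≥0) * ‖gcomp 𝒜 g i‖₊ :=
          le_mul_of_one_le_left (zero_le) hfac
      _ ≤ Sg ^ i := hpow
      _ ≤ M ^ i := pow_le_pow_left₀ (zero_le) (le_max_right _ _) i
  set u : A := g - 1 with hudef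
  have hu0 : gcomp 𝒜 u 0 = 0 := by
    rw [hudef, gcomp_sub, hg0, gcomp_one, if_pos rfl, sub_self]
  have hnu0 : gcomp 𝒜 (-u) 0 = 0 := by rw [gcomp_neg, hu0, neg_zero]
  have hui : ∀ i, ‖gcomp 𝒜 (-u) i‖₊ ≤ M ^ i := by
    intro i
    rw [gcomp_neg, nnnorm_neg]
    rcases Nat.eq_zero_or_pos i with rfl | hi
    · rw [hu0, nnnorm_zero]; exact zero_le
    · rcases le_or_gt i m with him | him
      · rw [hudef, gcomp_sub, gcomp_one, if_neg (by omega), sub_zero]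
        exact hgc i hi him
      · rw [gcomp_eq_zero_of_gt 𝒜 htrunc u him, nnnorm_zero]; exact zero_le
  set v : A := ∑ k ∈ Finset.range (m + 1), (-u) ^ k with hvdef
  have hgu : g = u + 1 := by rw [hudef]; noncomm_ring
  have humul : (-u) ^ (m + 1) = 0 := pow_succ_top_eq_zero 𝒜 htrunc (-u) hnu0
  have hvg : v * g = 1 := by
    have hgs := geom_sum_mul (-u) (m + 1)
    rw [humul] at hgs
    have hng : -u - 1 = -g := by rw [hgu]; noncomm_ring
    rw [hng] at hgs
    calc v * g = -(v * -g) := by noncomm_ring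
      _ = -((0 : A) - 1) := by rw [← hgs]
      _ = 1 := by noncomm_ring
  have hgv : g * v = 1 := by
    have hgs := mul_geom_sum (-u) (m + 1)
    rw [humul] at hgs
    have hng : -u - 1 = -g := by rw [hgu]; noncomm_ring
    rw [hng] at hgs
    calc g * v = -(-g * v) := by noncomm_ring
      _ = -((0 : A) - 1) := by rw [← hgs]
      _ = 1 := by noncomm_ring
  have hinv : Ring.inverse g = v := Ring.inverse_unit ⟨g, v, hgv, hvg⟩
  -- bound on components of v
  have hvi : ∀ i, i ≤ m → ‖gcomp 𝒜 v i‖₊ ≤ c₁ * M ^ i := by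
    intro i hi
    rw [hvdef, gcomp_sum]
    refine le_trans (nnnorm_sum_le _ _) ?_
    have hterm : ∀ k ∈ Finset.range (m + 1),
        ‖gcomp 𝒜 ((-u) ^ k) i‖₊ ≤ c * ((m : ℝ≥0) + 1) ^ m * M ^ i := by
      intro k hk
      rw [Finset.mem_range] at hk
      refine le_trans (gcomp_pow_nnnorm_le 𝒜 htrunc (-u) (c := c) hM1 (le_max_right _ _) hui k i hi) ?_
      have hpk : ((m : ℝ≥0) + 1) ^ k ≤ ((m : ℝ≥0) + 1) ^ m :=
        pow_le_pow_right₀ le_add_self (by omega)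
      exact mul_le_mul' (mul_le_mul' le_rfl hpk) le_rfl
    refine le_trans (Finset.sum_le_card_nsmul _ _ _ hterm) ?_
    rw [Finset.card_range, nsmul_eq_mul]
    apply le_of_eq
    rw [hc1def]
    push_cast
    ring
  -- bound on components of h - g
  have hδi : ∀ i, ‖gcomp 𝒜 (h - g) i‖₊ ≤ ε := by
    intro i
    rcases Nat.eq_zero_or_pos i with rfl | hi
    · rw [gcomp_sub, hh0, hg0, sub_self, nnnorm_zero]; exact zero_le
    · rcases le_or_gt i m with him | him
      · rw [gcomp_sub]
        exact Finset.le_sup (f := fun i => ‖gcomp 𝒜 h i - gcomp 𝒜 g i‖₊)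
          (Finset.mem_Icc.mpr ⟨hi, him⟩)
      · rw [gcomp_eq_zero_of_gt 𝒜 htrunc _ him, nnnorm_zero]; exact zero_le
  -- key component bound for the product
  have hkey : ∀ i, 1 ≤ i → i ≤ m →
      (i.factorial : ℝ≥0) * ‖gcomp 𝒜 (Ring.inverse g * h) i‖₊ ≤ (c₂ * M) ^ i * ε := by
    intro i h1 h2
    have hvh : Ring.inverse g * h = 1 + v * (h - g) := by
      rw [hinv]
      calc v * h = v * g + v * (h - g) := by noncomm_ring
        _ = 1 + v * (h - g) := by rw [hvg]
    have hcomp : ‖gcomp 𝒜 (Ring.inverse g * h) i‖₊ = ‖gcomp 𝒜 (v * (h - g)) i‖₊ := by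
      rw [hvh, gcomp_add, gcomp_one, if_neg (by omega), zero_add]
    rw [hcomp]
    have hterm : ∀ p ∈ Finset.HasAntidiagonal.antidiagonal i,
        ‖gcomp 𝒜 v p.1 * gcomp 𝒜 (h - g) p.2‖₊ ≤ c₁ * M ^ i * ε := by
      intro p hp
      rw [Finset.HasAntidiagonal.mem_antidiagonal] at hp
      calc ‖gcomp 𝒜 v p.1 * gcomp 𝒜 (h - g) p.2‖₊
          ≤ ‖gcomp 𝒜 v p.1‖₊ * ‖gcomp 𝒜 (h - g) p.2‖₊ := nnnorm_mul_le _ _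
        _ ≤ (c₁ * M ^ p.1) * ε := mul_le_mul' (hvi p.1 (by omega)) (hδi p.2)
        _ ≤ (c₁ * M ^ i) * ε := by
            apply mul_le_mul' (mul_le_mul' le_rfl ?_) le_rfl
            exact pow_le_pow_right₀ hM1 (by omega)
    have hsum : ‖gcomp 𝒜 (v * (h - g)) i‖₊ ≤ ((m : ℝ≥0) + 1) * (c₁ * M ^ i * ε) := by
      calc ‖gcomp 𝒜 (v * (h - g)) i‖₊
          = ‖∑ p ∈ Finset.HasAntidiagonal.antidiagonal i, gcomp 𝒜 v p.1 * gcomp 𝒜 (h - g) p.2‖₊ := by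
            rw [gcomp_mul 𝒜 htrunc]
        _ ≤ ∑ p ∈ Finset.HasAntidiagonal.antidiagonal i, ‖gcomp 𝒜 v p.1 * gcomp 𝒜 (h - g) p.2‖₊ :=
            nnnorm_sum_le _ _
        _ ≤ (Finset.HasAntidiagonal.antidiagonal i).card • (c₁ * M ^ i * ε) :=
            Finset.sum_le_card_nsmul _ _ _ hterm
        _ = ((i : ℝ≥0) + 1) * (c₁ * M ^ i * ε) := by
            rw [Finset.Nat.card_antidiagonal, nsmul_eq_mul]; push_cast; ring
        _ ≤ ((m : ℝ≥0) + 1) * (c₁ * M ^ i * ε) := by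
            apply mul_le_mul' (add_le_add_left ?_ 1) le_rfl
            exact_mod_cast h2
    have hfac : (i.factorial : ℝ≥0) ≤ (m.factorial : ℝ≥0) := by
      exact_mod_cast Nat.factorial_le h2
    calc (i.factorial : ℝ≥0) * ‖gcomp 𝒜 (v * (h - g)) i‖₊
        ≤ (m.factorial : ℝ≥0) * (((m : ℝ≥0) + 1) * (c₁ * M ^ i * ε)) :=
          mul_le_mul' hfac hsum
      _ = ((m.factorial : ℝ≥0) * (((m : ℝ≥0) + 1) * c₁)) * M ^ i * ε := by ring
      _ ≤ c₂ * M ^ i * ε := by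
          exact mul_le_mul' (mul_le_mul' (le_max_right _ _) le_rfl) le_rfl
      _ ≤ c₂ ^ i * M ^ i * ε := by
          exact mul_le_mul' (mul_le_mul' (le_self_pow₀ hc2one (by omega)) le_rfl) le_rfl
      _ = (c₂ * M) ^ i * ε := by rw [mul_pow]
  -- conclude
  have hmain : (Finset.Icc 1 m).sup
      (fun i => ((i.factorial : ℝ≥0) * ‖gcomp 𝒜 (Ring.inverse g * h) i‖₊) ^ ((i : ℝ)⁻¹))
      ≤ c₂ * M * ε ^ ((m : ℝ)⁻¹) := by
    apply Finset.sup_le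
    intro i hi
    obtain ⟨h1, h2⟩ := Finset.mem_Icc.mp hi
    have hεe : ε ^ ((i : ℝ)⁻¹) ≤ ε ^ ((m : ℝ)⁻¹) := by
      rcases eq_or_ne ε 0 with hε0 | hεne
      · rw [hε0, NNReal.zero_rpow (by positivity), NNReal.zero_rpow (by positivity)]
      · refine NNReal.rpow_le_rpow_of_exponent_ge ((pos_iff_ne_zero.mpr hεne)) hε1 ?_
        apply inv_anti₀
        · exact_mod_cast h1
        · exact_mod_cast h2
    calc ((i.factorial : ℝ≥0) * ‖gcomp 𝒜 (Ring.inverse g * h) i‖₊) ^ ((i : ℝ)⁻¹)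
        ≤ ((c₂ * M) ^ i * ε) ^ ((i : ℝ)⁻¹) :=
          NNReal.rpow_le_rpow (hkey i h1 h2) (by positivity)
      _ = (c₂ * M) * ε ^ ((i : ℝ)⁻¹) := by
          rw [NNReal.mul_rpow, pow_rpow_nat_inv' _ (by omega)]
      _ ≤ c₂ * M * ε ^ ((m : ℝ)⁻¹) := mul_le_mul' le_rfl hεe
  have hlhs : hnorm 𝒜 m (Ring.inverse g * h) = (((Finset.Icc 1 m).sup
      (fun i => ((i.factorial : ℝ≥0) * ‖gcomp 𝒜 (Ring.inverse g * h) i‖₊) ^ ((i : ℝ)⁻¹)) : ℝ≥0) : ℝ) := rfl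
  have hrhs : (c₂ : ℝ) * max 1 (hnorm 𝒜 m g) * maxDiff 𝒜 m g h ^ ((m : ℝ)⁻¹)
      = ((c₂ * M * ε ^ ((m : ℝ)⁻¹) : ℝ≥0) : ℝ) := by
    have h1 : hnorm 𝒜 m g = (Sg : ℝ) := rfl
    have h2 : maxDiff 𝒜 m g h = (ε : ℝ) := rfl
    rw [h1, h2, hMdef]
    push_cast [NNReal.coe_rpow, NNReal.coe_max]
    ring
  rw [hlhs, hrhs]
  exact_mod_cast hmain
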